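/- Let f : [0,1] → (0,∞) be a continuous probability density with cdf F(θ) = ∫₀^θ f(z) dz satisfying F(θ) < 1 for θ < 1. Define the war-of-attrition and all-pay equilibrium bids b^W(θ) := ∫₀^θ z f(z)/(1−F(z)) dz and b^A(θ) := θF(θ) − ∫₀^θ F(z)dz. Then b^W(θ) > b^A(θ) for every θ ∈ (0,1). -/
import Mathlib

open MeasureTheory intervalIntegral

noncomputable section

theorem stmt15
    (f : ℝ → ℝ)
    (hf_cont : ContinuousOn f (Set.Icc 0 1))
    (hf_pos : ∀ z ∈ Set.Icc (0:ℝ) 1, 0 < f z)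
    (F : ℝ → ℝ) (hF : ∀ θ : ℝ, F θ = ∫ z in (0:ℝ)..θ, f z)
    (hFlt : ∀ θ : ℝ, 0 ≤ θ → θ < 1 → F θ < 1)
    (bW bA : ℝ → ℝ)
    (hbW : ∀ θ : ℝ, bW θ = ∫ z in (0:ℝ)..θ, z * f z / (1 - F z))
    (hbA : ∀ θ : ℝ, bA θ = θ * F θ - ∫ z in (0:ℝ)..θ, F z) :
    ∀ θ ∈ Set.Ioo (0:ℝ) 1, bA θ < bW θ := by
  intro θ hθ
  obtain ⟨hθ0, hθ1⟩ := hθ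
  set p : ℝ → ℝ := fun z => max 0 (min z 1) with hp
  have hp_cont : Continuous p := continuous_const.max (continuous_id.min continuous_const)
  have hp_mem : ∀ z, p z ∈ Set.Icc (0:ℝ) 1 :=
    fun z => ⟨le_max_left _ _, max_le (by norm_num) (min_le_right _ _)⟩
  have hp_eq : ∀ z ∈ Set.Icc (0:ℝ) 1, p z = z := by
    intro z hz
    simp [hp, min_eq_left hz.2, max_eq_right hz.1]
  set g : ℝ → ℝ := fun z => f (p z) with hg
  have hg_cont : Continuous g := hf_cont.comp_continuous hp_cont hp_mem
  have hg_pos : ∀ z, 0 < g z := fun z => hf_pos _ (hp_mem z)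
  have hg_eq : ∀ z ∈ Set.Icc (0:ℝ) 1, g z = f z := by
    intro z hz
    simp only [hg]
    rw [hp_eq z hz]
  set G : ℝ → ℝ := fun t => ∫ z in (0:ℝ)..t, g z with hGdef
  have hFG : ∀ t ∈ Set.Icc (0:ℝ) 1, F t = G t := by
    intro t ht
    rw [hF, hGdef]
    apply intervalIntegral.integral_congr
    intro z hz
    rw [Set.uIcc_of_le ht.1] at hz
    exact (hg_eq z ⟨hz.1, hz.2.trans ht.2⟩).symm
  have hG_deriv : ∀ x : ℝ, HasDerivAt G (g x) x := by
    intro x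
    exact intervalIntegral.integral_hasDerivAt_right
      (hg_cont.intervalIntegrable 0 x)
      (hg_cont.stronglyMeasurableAtFilter _ _)
      hg_cont.continuousAt
  have hG_cont : Continuous G :=
    continuous_iff_continuousAt.mpr fun x => (hG_deriv x).continuousAt
  have hθIcc : θ ∈ Set.Icc (0:ℝ) 1 := ⟨hθ0.le, hθ1.le⟩
  have hsub : ∀ z ∈ Set.Icc 0 θ, z ∈ Set.Icc (0:ℝ) 1 :=
    fun z hz => ⟨hz.1, hz.2.trans hθ1.le⟩
  have hGlt1 : ∀ z ∈ Set.Icc 0 θ, G z < 1 := by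
    intro z hz
    rw [← hFG z (hsub z hz)]
    exact hFlt z hz.1 (lt_of_le_of_lt hz.2 hθ1)
  have hden_pos : ∀ z ∈ Set.Icc 0 θ, 0 < 1 - G z :=
    fun z hz => sub_pos.mpr (hGlt1 z hz)
  -- integration by parts
  have hparts : (∫ z in (0:ℝ)..θ, z * g z) = θ * G θ - ∫ z in (0:ℝ)..θ, G z := by
    have h := intervalIntegral.integral_mul_deriv_eq_deriv_mul
      (u := fun z => z) (u' := fun _ => (1:ℝ)) (v := G) (v' := g)
      (fun x _ => hasDerivAt_id x) (fun x _ => hG_deriv x)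
      (intervalIntegrable_const) (hg_cont.intervalIntegrable 0 θ)
    have hG0 : G 0 = 0 := intervalIntegral.integral_same
    rw [hG0] at h
    simpa using h
  have hbAθ : bA θ = ∫ z in (0:ℝ)..θ, z * g z := by
    rw [hbA θ, hFG θ hθIcc, hparts]
    congr 1
    apply intervalIntegral.integral_congr
    intro z hz
    rw [Set.uIcc_of_le hθ0.le] at hz
    exact hFG z (hsub z hz)
  have hbWθ : bW θ = ∫ z in (0:ℝ)..θ, z * g z / (1 - G z) := by
    rw [hbW θ]
    apply intervalIntegral.integral_congr
    intro z hz
    rw [Set.uIcc_of_le hθ0.le] at hz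
    simp only [← hg_eq z (hsub z hz), ← hFG z (hsub z hz)]
  -- continuity/integrability of the two integrands on [0, θ]
  have hzg_cont : Continuous (fun z : ℝ => z * g z) := continuous_id.mul hg_cont
  have hquot_cont : ContinuousOn (fun z : ℝ => z * g z / (1 - G z)) (Set.Icc 0 θ) := by
    apply ContinuousOn.div hzg_cont.continuousOn
      (continuous_const.sub hG_cont).continuousOn
    intro z hz
    exact ne_of_gt (hden_pos z hz)
  have hint1 : IntervalIntegrable (fun z : ℝ => z * g z) volume 0 θ :=
    hzg_cont.intervalIntegrable 0 θ
  have hint2 : IntervalIntegrable (fun z : ℝ => z * g z / (1 - G z)) volume 0 θ := by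
    apply ContinuousOn.intervalIntegrable
    rwa [Set.uIcc_of_le hθ0.le]
  have hGpos : ∀ z ∈ Set.Ioo 0 θ, 0 < G z := by
    intro z hz
    have : (0:ℝ) < ∫ x in (0:ℝ)..z, g x := by
      apply intervalIntegral.intervalIntegral_pos_of_pos
        (hg_cont.intervalIntegrable 0 z) (fun x => hg_pos x) hz.1
    exact this
  have hkey : (0:ℝ) < ∫ z in (0:ℝ)..θ, (z * g z / (1 - G z) - z * g z) := by
    apply intervalIntegral.intervalIntegral_pos_of_pos_on (hint2.sub hint1)
    · intro z hz
      have hzIcc : z ∈ Set.Icc 0 θ := ⟨hz.1.le, hz.2.le⟩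
      have hd := hden_pos z hzIcc
      have hnum : 0 < z * g z := mul_pos hz.1 (hg_pos z)
      have : z * g z < z * g z / (1 - G z) := by
        rw [lt_div_iff₀ hd]
        nlinarith [hGpos z hz]
      linarith
    · exact hθ0
  rw [hbAθ, hbWθ]
  have := intervalIntegral.integral_sub hint2 hint1
  linarith [this ▸ hkey]
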